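/- For every d ≥ 3, the subgroup G = ⟨b_1, ..., b_{d-1}⟩ of the Hanoi Towers group is fractal but not strongly fractal; in fact ψ_{x_k}(st_G(L_1)) is a proper subgroup of G for every k = 1, ..., d. -/

import Mathlib

open Equiv

namespace TreeFract

variable {X : Type*}

/-- The automorphism group of the rooted `d`-adic tree with vertex set the free
monoid `List X`: permutations of the vertex set fixing the root and sending
children of a vertex to children of its image (this is exactly incidence
preservation for the rooted tree). -/
def AutT (X : Type*) : Subgroup (Equiv.Perm (List X)) where
  carrier := {g | g [] = [] ∧ ∀ (u : List X) (x : X), ∃ y : X, g (u ++ [x]) = g u ++ [y]}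
  one_mem' := ⟨rfl, fun _ x => ⟨x, rfl⟩⟩
  mul_mem' := by
    rintro f g ⟨hf1, hf2⟩ ⟨hg1, hg2⟩
    refine ⟨?_, fun u x => ?_⟩
    · show f (g []) = []
      rw [hg1, hf1]
    · obtain ⟨y, hy⟩ := hg2 u x
      obtain ⟨z, hz⟩ := hf2 (g u) y
      exact ⟨z, by show f (g (u ++ [x])) = f (g u) ++ [z]; rw [hy, hz]⟩
  inv_mem' := by
    rintro g ⟨hg1, hg2⟩
    have hinj := g.injective
    refine ⟨?_, fun u x => ?_⟩
    · apply hinj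
      show g (g⁻¹ []) = g []
      rw [(Equiv.Perm.eq_inv_iff_eq (f := g)).mp rfl, hg1]
    · have hne : g⁻¹ (u ++ [x]) ≠ [] := by
        intro h
        have h2 : u ++ [x] = g [] := by
          conv_lhs => rw [← (Equiv.Perm.eq_inv_iff_eq (f := g) (y := u ++ [x])).mp rfl, h]
        rw [hg1] at h2
        simp at h2
      obtain ⟨y, hy⟩ : ∃ y, g⁻¹ (u ++ [x]) = (g⁻¹ (u ++ [x])).dropLast ++ [y] :=
        ⟨(g⁻¹ (u ++ [x])).getLast hne, (List.dropLast_append_getLast hne).symm⟩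
      obtain ⟨z, hz⟩ := hg2 ((g⁻¹ (u ++ [x])).dropLast) y
      have happ : g ((g⁻¹ (u ++ [x])).dropLast) ++ [z] = u ++ [x] := by
        rw [← hz, ← hy, (Equiv.Perm.eq_inv_iff_eq (f := g)).mp rfl]
      have h2 : g ((g⁻¹ (u ++ [x])).dropLast) = u ∧ ([z] : List X) = [x] :=
        List.append_inj' happ rfl
      refine ⟨y, ?_⟩
      rw [hy]
      congr 1
      apply hinj
      rw [(Equiv.Perm.eq_inv_iff_eq (f := g)).mp rfl, h2.1]

/-- The underlying function of the section of `g` at the vertex `u`. -/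
def sectFun (g : Equiv.Perm (List X)) (u : List X) : List X → List X :=
  fun v => (g (u ++ v)).drop (g u).length

open scoped Classical in
/-- The section `g_u` of a tree automorphism `g` at a vertex `u`, i.e. the unique
automorphism with `g (u ++ v) = g u ++ g_u v` for all `v`.  (By convention it is
the identity for permutations which are not tree automorphisms.) -/
noncomputable def sect (g : Equiv.Perm (List X)) (u : List X) : Equiv.Perm (List X) :=
  if h : Function.Bijective (sectFun g u) then Equiv.ofBijective _ h else 1

/-- The underlying function of the label of `g` at the vertex `u`. -/
def labelFun (g : Equiv.Perm (List X)) (u : List X) : X → X :=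
  fun x => (g (u ++ [x])).getLastD x

open scoped Classical in
/-- The label `g_(u)` of a tree automorphism `g` at a vertex `u`: the permutation
of `X` with `g (u ++ [x]) = g u ++ [g_(u) x]`.  (By convention it is the identity
for permutations which are not tree automorphisms.) -/
noncomputable def label (g : Equiv.Perm (List X)) (u : List X) : Equiv.Perm X :=
  if h : Function.Bijective (labelFun g u) then Equiv.ofBijective _ h else 1

/-- The stabilizer `st_G(u)` of the vertex `u` in `G`. -/
def stV (G : Subgroup (Equiv.Perm (List X))) (u : List X) : Subgroup (Equiv.Perm (List X)) where
  carrier := {g | g ∈ G ∧ g u = u}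
  one_mem' := ⟨one_mem G, rfl⟩
  mul_mem' := by
    rintro f g ⟨hf, hf2⟩ ⟨hg, hg2⟩
    exact ⟨mul_mem hf hg, by show f (g u) = u; rw [hg2, hf2]⟩
  inv_mem' := by
    rintro g ⟨hg, hg2⟩
    refine ⟨inv_mem hg, ?_⟩
    apply g.injective
    show g (g⁻¹ u) = g u
    rw [(Equiv.Perm.eq_inv_iff_eq (f := g)).mp rfl, hg2]

/-- The stabilizer `st_G(L_n)` of the `n`-th level in `G`. -/
def stL (G : Subgroup (Equiv.Perm (List X))) (n : ℕ) : Subgroup (Equiv.Perm (List X)) where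
  carrier := {g | g ∈ G ∧ ∀ u : List X, u.length = n → g u = u}
  one_mem' := ⟨one_mem G, fun _ _ => rfl⟩
  mul_mem' := by
    rintro f g ⟨hf, hf2⟩ ⟨hg, hg2⟩
    exact ⟨mul_mem hf hg, fun u hu => by show f (g u) = u; rw [hg2 u hu, hf2 u hu]⟩
  inv_mem' := by
    rintro g ⟨hg, hg2⟩
    refine ⟨inv_mem hg, fun u hu => ?_⟩
    apply g.injective
    show g (g⁻¹ u) = g u
    rw [(Equiv.Perm.eq_inv_iff_eq (f := g)).mp rfl, hg2 u hu]

/-- `G` is self-similar: sections of elements of `G` lie in `G`. -/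
def SelfSimilar (G : Subgroup (Equiv.Perm (List X))) : Prop :=
  ∀ g ∈ G, ∀ u : List X, sect g u ∈ G

/-- `G` acts transitively on the first level of the tree. -/
def FirstLevelTransitive (G : Subgroup (Equiv.Perm (List X))) : Prop :=
  ∀ x y : X, ∃ g ∈ G, g [x] = [y]

/-- `G` is level transitive: it acts transitively on every level of the tree. -/
def LevelTransitive (G : Subgroup (Equiv.Perm (List X))) : Prop :=
  ∀ (n : ℕ) (u v : List X), u.length = n → v.length = n → ∃ g ∈ G, g u = v

/-- `G` is fractal: `ψ_u(st_G(u)) = G` for every vertex `u`. -/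
def Fractal (G : Subgroup (Equiv.Perm (List X))) : Prop :=
  ∀ u : List X,
    (fun g => sect g u) '' (stV G u : Set (Equiv.Perm (List X))) = (G : Set (Equiv.Perm (List X)))

/-- `G` is strongly fractal: `ψ_x(st_G(L_1)) = G` for every first-level vertex `x`. -/
def StronglyFractal (G : Subgroup (Equiv.Perm (List X))) : Prop :=
  ∀ x : X,
    (fun g => sect g [x]) '' (stL G 1 : Set (Equiv.Perm (List X))) = (G : Set (Equiv.Perm (List X)))

/-- `G` is super strongly fractal: `ψ_u(st_G(L_n)) = G` for every `n` and every `u ∈ L_n`. -/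
def SuperStronglyFractal (G : Subgroup (Equiv.Perm (List X))) : Prop :=
  ∀ (n : ℕ) (u : List X), u.length = n →
    (fun g => sect g u) '' (stL G n : Set (Equiv.Perm (List X))) = (G : Set (Equiv.Perm (List X)))

/-- The normal closure `⟨S⟩^G` of a subset `S ⊆ G` in the subgroup `G`, realized as a
subgroup of the ambient group: the subgroup generated by all `G`-conjugates of `S`. -/
def normalClosureIn (G : Subgroup (Equiv.Perm (List X))) (S : Set (Equiv.Perm (List X))) :
    Subgroup (Equiv.Perm (List X)) :=
  Subgroup.closure {t | ∃ g ∈ G, ∃ s ∈ S, t = g * s * g⁻¹}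

end TreeFract
namespace TreeFract

/-! ### The Hanoi towers generators -/

section Hanoi

variable {d : ℕ}

/-- The underlying function of the automorphism `a_{ij}` of the Hanoi Towers group:
it swaps the first occurrence of `i` or `j` in a word. -/
def hanoiFun (i j : Fin d) : List (Fin d) → List (Fin d)
  | [] => []
  | x :: w => if x = i then j :: w else if x = j then i :: w else x :: hanoiFun i j w

lemma hanoiFun_invol (i j : Fin d) : ∀ w, hanoiFun i j (hanoiFun i j w) = w
  | [] => rfl
  | x :: w => by
    by_cases h1 : x = i
    · subst h1
      by_cases h2 : j = x
      · simp [hanoiFun, h2]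
      · simp [hanoiFun, h2]
    · by_cases h2 : x = j
      · subst h2
        simp [hanoiFun, h1]
      · simp [hanoiFun, h1, h2, hanoiFun_invol i j w]

/-- The automorphism `a_{ij}` of the `d`-adic tree: its label at the root is the
transposition `(x_i x_j)`, its sections at the first-level vertices `x_i` and `x_j`
are trivial and all its other first-level sections equal `a_{ij}` again. -/
def hanoiA (i j : Fin d) : Equiv.Perm (List (Fin d)) :=
  ⟨hanoiFun i j, hanoiFun i j, hanoiFun_invol i j, hanoiFun_invol i j⟩

end Hanoi

/-- The generator `b_i = a_{i,i+1}` (here `i` runs through `0, …, d-2`,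
corresponding to the paper's `b_1, …, b_{d-1}`). -/
def hanoiB (d : ℕ) (i : ℕ) (h : i + 1 < d) : Equiv.Perm (List (Fin d)) :=
  hanoiA ⟨i, Nat.lt_of_succ_lt h⟩ ⟨i + 1, h⟩

/-- The subgroup `G = ⟨b_1, …, b_{d-1}⟩` of the Hanoi Towers group. -/
def hanoiGroup (d : ℕ) : Subgroup (Equiv.Perm (List (Fin d))) :=
  Subgroup.closure {g | ∃ (i : ℕ) (h : i + 1 < d), g = hanoiB d i h}

/-! ### GGS groups (and the rooted automorphism `a`) -/

section GGS

variable {p : ℕ}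

/-- The function adding `m` to the first letter of a word over `ZMod p`. -/
def rotFun (m : ZMod p) : List (ZMod p) → List (ZMod p)
  | [] => []
  | x :: w => (x + m) :: w

/-- The rooted automorphism of the `p`-adic tree whose label at the root is the
`p`-cycle `x ↦ x + m`; for `m = 1` this is the generator `a` of a GGS-group
(identifying `x_i` with `i mod p`). -/
def rotPerm (m : ZMod p) : Equiv.Perm (List (ZMod p)) :=
  ⟨rotFun m, rotFun (-m),
    by intro w; cases w <;> simp [rotFun],
    by intro w; cases w <;> simp [rotFun]⟩

/-- The underlying function of the GGS generator `b` with defining vector `e`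
(the value `e 0` is irrelevant; `e i` for `i ≠ 0` are the coordinates
`e_1, …, e_{p-1}`): `b` fixes the first level, its section at `x_i` is
`a^{e_i}` for `i = 1, …, p-1` and its section at `x_p` (identified with `0`)
is `b` again. -/
def ggsFun (e : ZMod p → ZMod p) : List (ZMod p) → List (ZMod p)
  | [] => []
  | x :: w => if x = 0 then x :: ggsFun e w else x :: rotFun (e x) w

lemma ggsFun_inv (e : ZMod p → ZMod p) : ∀ w, ggsFun (fun i => -(e i)) (ggsFun e w) = w
  | [] => rfl
  | x :: w => by
    by_cases h : x = 0
    · simp only [ggsFun, if_pos h]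
      rw [ggsFun_inv e w]
    · simp only [ggsFun, if_neg h]
      cases w <;> simp [rotFun]

/-- The GGS generator `b` with defining vector `e`, as a tree automorphism. -/
def ggsB (e : ZMod p → ZMod p) : Equiv.Perm (List (ZMod p)) :=
  ⟨ggsFun e, ggsFun (fun i => -(e i)), ggsFun_inv e, by
    intro w
    have h := ggsFun_inv (fun i => -(e i)) w
    simpa using h⟩

end GGS

/-- The GGS-group `G = ⟨a, b⟩` over the `p`-adic tree with defining vector `e`. -/
def ggsGroup (p : ℕ) (e : ZMod p → ZMod p) : Subgroup (Equiv.Perm (List (ZMod p))) :=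
  Subgroup.closure {rotPerm 1, ggsB e}

/-! ### The first Grigorchuk group -/

/-- The three directed generators `b, c, d` (for `k % 3 = 0, 1, 2` respectively) of the
first Grigorchuk group, defined by the mutual recursion
`b = (a, c)`, `c = (a, d)`, `d = (1, b)` (identifying `x_1` with `0` and `x_2` with `1`). -/
def griFun : ℕ → List (ZMod 2) → List (ZMod 2)
  | _, [] => []
  | k, x :: w => if x = 0 then (if k % 3 = 2 then x :: w else x :: rotFun 1 w)
                 else x :: griFun (k + 1) w

lemma griFun_invol : ∀ (w : List (ZMod 2)) (k : ℕ), griFun k (griFun k w) = w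
  | [], _ => rfl
  | x :: w, k => by
    by_cases h : x = 0
    · by_cases h3 : k % 3 = 2
      · simp [griFun, h, h3]
      · simp only [griFun, if_pos h, if_neg h3]
        cases w with
        | nil => rfl
        | cons y v =>
            have hy : y + 1 + 1 = y := by
              rw [add_assoc]
              simp [show (1 : ZMod 2) + 1 = 0 from rfl]
            simp [rotFun, hy]
    · simp only [griFun, if_neg h]
      rw [griFun_invol w (k + 1)]

/-- The generator `b` of the first Grigorchuk group, with sections `(a, c)`. -/
def griB : Equiv.Perm (List (ZMod 2)) :=
  ⟨griFun 0, griFun 0, fun w => griFun_invol w 0, fun w => griFun_invol w 0⟩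

/-- The generator `c` of the first Grigorchuk group, with sections `(a, d)`. -/
def griC : Equiv.Perm (List (ZMod 2)) :=
  ⟨griFun 1, griFun 1, fun w => griFun_invol w 1, fun w => griFun_invol w 1⟩

/-- The generator `d` of the first Grigorchuk group, with sections `(1, b)`. -/
def griD : Equiv.Perm (List (ZMod 2)) :=
  ⟨griFun 2, griFun 2, fun w => griFun_invol w 2, fun w => griFun_invol w 2⟩

/-- The first Grigorchuk group `𝒢 = ⟨a, b, c, d⟩` acting on the binary tree. -/
def grigorchukGroup : Subgroup (Equiv.Perm (List (ZMod 2))) :=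
  Subgroup.closure {rotPerm 1, griB, griC, griD}

end TreeFract

theorem Equiv.Perm.apply_inv_self {α : Type*} (f : Equiv.Perm α) (x : α) : f (f⁻¹ x) = x :=
  (Equiv.Perm.eq_inv_iff_eq (f := f)).mp rfl

theorem Equiv.Perm.inv_apply_self {α : Type*} (f : Equiv.Perm α) (x : α) : f⁻¹ (f x) = x :=
  (Equiv.Perm.inv_eq_iff_eq (f := f)).mpr rfl

namespace TreeFract


/-! ### Auxiliary API for tree automorphisms -/

section API

variable {X : Type*} {f g : Equiv.Perm (List X)}

lemma autT_nil (hg : g ∈ AutT X) : g [] = [] := hg.1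

lemma apply_append_exists (hg : g ∈ AutT X) (u v : List X) :
    ∃ w : List X, w.length = v.length ∧ g (u ++ v) = g u ++ w := by
  induction v using List.reverseRecOn with
  | nil => exact ⟨[], rfl, by simp⟩
  | append_singleton v x ih =>
    obtain ⟨w, hwl, hw⟩ := ih
    obtain ⟨y, hy⟩ := hg.2 (u ++ v) x
    refine ⟨w ++ [y], by simp [hwl], ?_⟩
    rw [← List.append_assoc, hy, hw, List.append_assoc]

lemma length_apply (hg : g ∈ AutT X) (u : List X) : (g u).length = u.length := by
  obtain ⟨w, hwl, hw⟩ := apply_append_exists hg [] u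
  simp only [List.nil_append, autT_nil hg] at hw
  rw [hw]; exact hwl

lemma sectFun_spec (hg : g ∈ AutT X) (u v : List X) :
    g (u ++ v) = g u ++ sectFun g u v := by
  obtain ⟨w, hwl, hw⟩ := apply_append_exists hg u v
  have : sectFun g u v = w := by
    show (g (u ++ v)).drop (g u).length = w
    rw [hw, List.drop_left]
  rw [this, hw]

lemma sectFun_bijective (hg : g ∈ AutT X) (u : List X) :
    Function.Bijective (sectFun g u) := by
  have hg' : g⁻¹ ∈ AutT X := (AutT X).inv_mem hg
  apply Function.bijective_iff_has_inverse.2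
  refine ⟨sectFun g⁻¹ (g u), fun v => ?_, fun v => ?_⟩
  · show (g⁻¹ (g u ++ sectFun g u v)).drop (g⁻¹ (g u)).length = v
    rw [← sectFun_spec hg u v, Equiv.Perm.inv_apply_self, Equiv.Perm.inv_apply_self,
      List.drop_left]
  · have h1 : g⁻¹ (g u ++ v) = u ++ sectFun g⁻¹ (g u) v := by
      have := sectFun_spec hg' (g u) v
      rwa [Equiv.Perm.inv_apply_self] at this
    have h2 : g (u ++ sectFun g⁻¹ (g u) v) = g u ++ sectFun g u (sectFun g⁻¹ (g u) v) :=
      sectFun_spec hg u _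
    rw [← h1, Equiv.Perm.apply_inv_self] at h2
    exact (List.append_cancel_left h2).symm

lemma sect_coe (hg : g ∈ AutT X) (u v : List X) : sect g u v = sectFun g u v := by
  unfold sect
  rw [dif_pos (sectFun_bijective hg u)]
  rfl

lemma apply_append (hg : g ∈ AutT X) (u v : List X) :
    g (u ++ v) = g u ++ sect g u v := by
  rw [sect_coe hg]; exact sectFun_spec hg u v

lemma sect_nil (hg : g ∈ AutT X) : sect g [] = g := by
  apply Equiv.ext; intro v
  rw [sect_coe hg]
  show (g ([] ++ v)).drop (g []).length = g v
  simp [autT_nil hg]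

lemma sect_one (u : List X) : sect (1 : Equiv.Perm (List X)) u = 1 := by
  apply Equiv.ext; intro v
  rw [sect_coe (AutT X).one_mem]
  show ((1 : Equiv.Perm (List X)) (u ++ v)).drop ((1 : Equiv.Perm (List X)) u).length = _
  simp

lemma sect_mem (hg : g ∈ AutT X) (u : List X) : sect g u ∈ AutT X := by
  constructor
  · have := apply_append hg u []
    rw [List.append_nil] at this
    exact (List.self_eq_append_right.1 this)
  · intro v x
    obtain ⟨y, hy⟩ := hg.2 (u ++ v) x
    refine ⟨y, ?_⟩
    have h1 : g (u ++ (v ++ [x])) = g u ++ sect g u (v ++ [x]) := apply_append hg u _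
    rw [← List.append_assoc, hy, apply_append hg u v, List.append_assoc] at h1
    exact (List.append_cancel_left h1.symm)

lemma sect_mul (hf : f ∈ AutT X) (hg : g ∈ AutT X) (u : List X) :
    sect (f * g) u = sect f (g u) * sect g u := by
  apply Equiv.ext; intro v
  have hfg := (AutT X).mul_mem hf hg
  have h1 : (f * g) (u ++ v) = (f * g) u ++ sect (f * g) u v := apply_append hfg u v
  have h2 : (f * g) (u ++ v) = f (g u) ++ sect f (g u) (sect g u v) := by
    show f (g (u ++ v)) = _
    rw [apply_append hg u v, apply_append hf (g u) (sect g u v)]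
  rw [h2] at h1
  have : (f * g) u = f (g u) := rfl
  rw [this] at h1
  exact (List.append_cancel_left h1).symm

lemma sect_inv (hg : g ∈ AutT X) (u : List X) : sect g⁻¹ (g u) = (sect g u)⁻¹ := by
  have h := sect_mul ((AutT X).inv_mem hg) hg u
  rw [inv_mul_cancel, sect_one] at h
  exact eq_inv_of_mul_eq_one_left h.symm

lemma sect_inv' (hg : g ∈ AutT X) (u : List X) : sect g⁻¹ u = (sect g (g⁻¹ u))⁻¹ := by
  have := sect_inv hg (g⁻¹ u)
  rwa [Equiv.Perm.apply_inv_self] at this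

lemma sect_sect (hg : g ∈ AutT X) (u v : List X) :
    sect g (u ++ v) = sect (sect g u) v := by
  apply Equiv.ext; intro w
  have e1 : g (u ++ (v ++ w)) = g u ++ (sect g u v ++ sect (sect g u) v w) := by
    rw [apply_append hg u (v ++ w), apply_append (sect_mem hg u) v w]
  have e2 : g (u ++ (v ++ w)) = g u ++ (sect g u v ++ sect g (u ++ v) w) := by
    conv_lhs => rw [← List.append_assoc, apply_append hg (u ++ v) w, apply_append hg u v]
    rw [List.append_assoc]
  have h3 := List.append_cancel_left (e1.symm.trans e2)
  exact (List.append_cancel_left h3).symm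

/-! label at the root -/

lemma labelFun_root (hg : g ∈ AutT X) (x : X) : g [x] = [labelFun g [] x] := by
  obtain ⟨y, hy⟩ := hg.2 [] x
  rw [List.nil_append, autT_nil hg, List.nil_append] at hy
  have : labelFun g [] x = y := by
    show (g ([] ++ [x])).getLastD x = y
    rw [List.nil_append, hy]; rfl
  rw [this, hy]

lemma labelFun_root_bijective (hg : g ∈ AutT X) : Function.Bijective (labelFun g []) := by
  have hg' : g⁻¹ ∈ AutT X := (AutT X).inv_mem hg
  apply Function.bijective_iff_has_inverse.2
  refine ⟨labelFun g⁻¹ [], fun x => ?_, fun x => ?_⟩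
  · have h1 : g⁻¹ [labelFun g [] x] = [labelFun g⁻¹ [] (labelFun g [] x)] :=
      labelFun_root hg' _
    rw [← labelFun_root hg x, Equiv.Perm.inv_apply_self] at h1
    exact (List.cons.injEq _ _ _ _ ▸ h1).1.symm
  · have h1 : g [labelFun g⁻¹ [] x] = [labelFun g [] (labelFun g⁻¹ [] x)] :=
      labelFun_root hg _
    rw [← labelFun_root hg' x, Equiv.Perm.apply_inv_self] at h1
    exact (List.cons.injEq _ _ _ _ ▸ h1).1.symm

lemma label_root_coe (hg : g ∈ AutT X) (x : X) : label g [] x = labelFun g [] x := by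
  unfold label
  rw [dif_pos (labelFun_root_bijective hg)]
  rfl

lemma apply_singleton (hg : g ∈ AutT X) (x : X) : g [x] = [label g [] x] := by
  rw [label_root_coe hg]; exact labelFun_root hg x

lemma label_root_one : label (1 : Equiv.Perm (List X)) [] = 1 := by
  apply Equiv.ext; intro x
  rw [label_root_coe (AutT X).one_mem]
  rfl

lemma label_root_mul (hf : f ∈ AutT X) (hg : g ∈ AutT X) :
    label (f * g) [] = label f [] * label g [] := by
  apply Equiv.ext; intro x
  have h1 : (f * g) [x] = [label (f * g) [] x] :=
    apply_singleton ((AutT X).mul_mem hf hg) x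
  have h2 : (f * g) [x] = [label f [] (label g [] x)] := by
    show f (g [x]) = _
    rw [apply_singleton hg x, apply_singleton hf]
  rw [h2] at h1
  exact ((List.cons.injEq _ _ _ _ ▸ h1).1).symm

lemma label_root_inv (hg : g ∈ AutT X) : label g⁻¹ [] = (label g [])⁻¹ := by
  have h := label_root_mul ((AutT X).inv_mem hg) hg
  rw [inv_mul_cancel, label_root_one] at h
  exact eq_inv_of_mul_eq_one_left h.symm

end API


/-! ### Hanoi generators: basic facts -/

section HanoiAPI

variable {d : ℕ}

lemma hanoiA_apply (i j : Fin d) (u : List (Fin d)) : hanoiA i j u = hanoiFun i j u := rfl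

lemma hanoiA_mem (i j : Fin d) : hanoiA i j ∈ AutT (Fin d) := by
  refine ⟨rfl, fun u x => ?_⟩
  induction u with
  | nil =>
    by_cases h1 : x = i
    · exact ⟨j, by simp [hanoiA_apply, hanoiFun, h1]⟩
    · by_cases h2 : x = j
      · exact ⟨i, by simp [hanoiA_apply, hanoiFun, h1, h2]⟩
      · exact ⟨x, by simp [hanoiA_apply, hanoiFun, h1, h2]⟩
  | cons z u ih =>
    obtain ⟨y, hy⟩ := ih
    by_cases h1 : z = i
    · exact ⟨x, by simp [hanoiA_apply, hanoiFun, h1]⟩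
    · by_cases h2 : z = j
      · exact ⟨x, by by_cases h3 : j = i <;> simp [hanoiA_apply, hanoiFun, h1, h2, h3]⟩
      · refine ⟨y, ?_⟩
        simp only [hanoiA_apply, List.cons_append, hanoiFun, if_neg h1, if_neg h2] at hy ⊢
        rw [hy]

lemma hanoiA_single_left (i j : Fin d) : hanoiA i j [i] = [j] := by
  simp [hanoiA_apply, hanoiFun]

lemma hanoiA_single_right {i j : Fin d} (h : j ≠ i) : hanoiA i j [j] = [i] := by
  simp [hanoiA_apply, hanoiFun, h]

lemma hanoiA_single_other {i j k : Fin d} (h1 : k ≠ i) (h2 : k ≠ j) :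
    hanoiA i j [k] = [k] := by
  simp [hanoiA_apply, hanoiFun, h1, h2]

lemma sect_hanoiA_left (i j : Fin d) : sect (hanoiA i j) [i] = 1 := by
  apply Equiv.ext; intro v
  rw [sect_coe (hanoiA_mem i j)]
  show (hanoiA i j ([i] ++ v)).drop ((hanoiA i j [i]).length) = _
  rw [hanoiA_single_left]
  simp [hanoiA_apply, hanoiFun]

lemma sect_hanoiA_right {i j : Fin d} (h : j ≠ i) : sect (hanoiA i j) [j] = 1 := by
  apply Equiv.ext; intro v
  rw [sect_coe (hanoiA_mem i j)]
  show (hanoiA i j ([j] ++ v)).drop ((hanoiA i j [j]).length) = _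
  rw [hanoiA_single_right h]
  simp [hanoiA_apply, hanoiFun, h]

lemma sect_hanoiA_other {i j k : Fin d} (h1 : k ≠ i) (h2 : k ≠ j) :
    sect (hanoiA i j) [k] = hanoiA i j := by
  apply Equiv.ext; intro v
  rw [sect_coe (hanoiA_mem i j)]
  show (hanoiA i j ([k] ++ v)).drop ((hanoiA i j [k]).length) = _
  rw [hanoiA_single_other h1 h2]
  simp [hanoiA_apply, hanoiFun, h1, h2]

lemma label_hanoiA {i j : Fin d} (hij : i ≠ j) :
    label (hanoiA i j) [] = Equiv.swap i j := by
  apply Equiv.ext; intro x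
  have h1 : hanoiA i j [x] = [label (hanoiA i j) [] x] := apply_singleton (hanoiA_mem i j) x
  by_cases hxi : x = i
  · subst hxi
    rw [hanoiA_single_left] at h1
    rw [Equiv.swap_apply_left]
    exact (List.cons.injEq _ _ _ _ ▸ h1).1.symm
  · by_cases hxj : x = j
    · subst hxj
      rw [hanoiA_single_right (Ne.symm hij)] at h1
      rw [Equiv.swap_apply_right]
      exact (List.cons.injEq _ _ _ _ ▸ h1).1.symm
    · rw [hanoiA_single_other hxi hxj] at h1
      rw [Equiv.swap_apply_of_ne_of_ne hxi hxj]
      exact (List.cons.injEq _ _ _ _ ▸ h1).1.symm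

/-! generators `b_i` -/

lemma B_mem (i : ℕ) (h : i + 1 < d) : hanoiB d i h ∈ AutT (Fin d) := hanoiA_mem _ _

lemma B_ne (i : ℕ) (h : i + 1 < d) :
    (⟨i, Nat.lt_of_succ_lt h⟩ : Fin d) ≠ ⟨i + 1, h⟩ := by
  simp [Fin.ext_iff]

lemma B_apply_lo (i : ℕ) (h : i + 1 < d) :
    hanoiB d i h [⟨i, Nat.lt_of_succ_lt h⟩] = [⟨i + 1, h⟩] := hanoiA_single_left _ _

lemma B_apply_hi (i : ℕ) (h : i + 1 < d) :
    hanoiB d i h [⟨i + 1, h⟩] = [⟨i, Nat.lt_of_succ_lt h⟩] :=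
  hanoiA_single_right (Ne.symm (B_ne i h))

lemma B_apply_other (i : ℕ) (h : i + 1 < d) {m : Fin d} (hm : (m : ℕ) ≠ i)
    (hm' : (m : ℕ) ≠ i + 1) : hanoiB d i h [m] = [m] :=
  hanoiA_single_other (by simp [Fin.ext_iff, hm]) (by simp [Fin.ext_iff, hm'])

lemma sect_B_lo (i : ℕ) (h : i + 1 < d) :
    sect (hanoiB d i h) [⟨i, Nat.lt_of_succ_lt h⟩] = 1 := sect_hanoiA_left _ _

lemma sect_B_hi (i : ℕ) (h : i + 1 < d) :
    sect (hanoiB d i h) [⟨i + 1, h⟩] = 1 := sect_hanoiA_right (Ne.symm (B_ne i h))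

lemma sect_B_other (i : ℕ) (h : i + 1 < d) {m : Fin d} (hm : (m : ℕ) ≠ i)
    (hm' : (m : ℕ) ≠ i + 1) : sect (hanoiB d i h) [m] = hanoiB d i h :=
  sect_hanoiA_other (by simp [Fin.ext_iff, hm]) (by simp [Fin.ext_iff, hm'])

lemma label_B (i : ℕ) (h : i + 1 < d) :
    label (hanoiB d i h) [] = Equiv.swap ⟨i, Nat.lt_of_succ_lt h⟩ ⟨i + 1, h⟩ :=
  label_hanoiA (B_ne i h)

lemma B_mem_G (i : ℕ) (h : i + 1 < d) : hanoiB d i h ∈ hanoiGroup d :=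
  Subgroup.subset_closure ⟨i, h, rfl⟩

lemma hanoiGroup_le_AutT : hanoiGroup d ≤ AutT (Fin d) := by
  rw [hanoiGroup, Subgroup.closure_le]
  rintro g ⟨i, h, rfl⟩
  exact B_mem i h

lemma sect_B_any (i : ℕ) (h : i + 1 < d) (u : List (Fin d)) :
    sect (hanoiB d i h) u = 1 ∨ sect (hanoiB d i h) u = hanoiB d i h := by
  induction u with
  | nil => exact Or.inr (sect_nil (B_mem i h))
  | cons x u ih =>
    rw [show x :: u = [x] ++ u from rfl, sect_sect (B_mem i h)]
    by_cases hx : (x : ℕ) = i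
    · rw [show x = (⟨i, Nat.lt_of_succ_lt h⟩ : Fin d) from Fin.ext hx, sect_B_lo, sect_one]
      exact Or.inl rfl
    · by_cases hx' : (x : ℕ) = i + 1
      · rw [show x = (⟨i + 1, h⟩ : Fin d) from Fin.ext hx', sect_B_hi, sect_one]
        exact Or.inl rfl
      · rw [sect_B_other i h hx hx']
        exact ih

lemma hanoi_selfSimilar : ∀ g ∈ hanoiGroup d, ∀ u, sect g u ∈ hanoiGroup d := by
  intro g hg
  induction hg using Subgroup.closure_induction with
  | mem x hx =>
    obtain ⟨i, h, rfl⟩ := hx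
    intro u
    rcases sect_B_any i h u with h' | h' <;> rw [h']
    · exact one_mem _
    · exact B_mem_G i h
  | one => intro u; rw [sect_one]; exact one_mem _
  | mul x y hx hy ihx ihy =>
    intro u
    rw [sect_mul (hanoiGroup_le_AutT hx) (hanoiGroup_le_AutT hy)]
    exact mul_mem (ihx _) (ihy _)
  | inv x hx ihx =>
    intro u
    rw [sect_inv' (hanoiGroup_le_AutT hx)]
    exact inv_mem (ihx _)

end HanoiAPI


/-! ### Fractality -/

section Fractality

variable {d : ℕ}

lemma mem_stV {G : Subgroup (Equiv.Perm (List (Fin d)))} {u : List (Fin d)}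
    {g : Equiv.Perm (List (Fin d))} : g ∈ stV G u ↔ g ∈ G ∧ g u = u := Iff.rfl

lemma mem_stL {G : Subgroup (Equiv.Perm (List (Fin d)))} {n : ℕ}
    {g : Equiv.Perm (List (Fin d))} :
    g ∈ stL G n ↔ g ∈ G ∧ ∀ u : List (Fin d), u.length = n → g u = u := Iff.rfl

set_option maxHeartbeats 1000000 in
lemma surj1_gen (hd : 3 ≤ d) (k : Fin d) (i : ℕ) (h : i + 1 < d) :
    ∃ w ∈ hanoiGroup d, w [k] = [k] ∧ sect w [k] = hanoiB d i h := by
  by_cases hki : (k : ℕ) = i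
  · -- vertex k = x_i
    rcases Nat.eq_zero_or_eq_succ_pred i with hi0 | his
    · -- i = 0 : use the word b₀ b₁ b₀ b₁ b₀
      subst hi0
      have h0 : 0 + 1 < d := by omega
      have h1 : 1 + 1 < d := by omega
      set b0 := hanoiB d 0 h0 with hb0
      set b1 := hanoiB d 1 h1 with hb1
      have mb0 : b0 ∈ AutT (Fin d) := B_mem 0 h0
      have mb1 : b1 ∈ AutT (Fin d) := B_mem 1 h1
      have hk : k = (⟨0, by omega⟩ : Fin d) := Fin.ext hki
      rw [hk]
      have a1 : b0 [(⟨0, by omega⟩ : Fin d)] = [⟨1, by omega⟩] := B_apply_lo 0 h0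
      have a2 : b1 [(⟨1, by omega⟩ : Fin d)] = [⟨2, by omega⟩] := B_apply_lo 1 h1
      have a3 : b0 [(⟨2, by omega⟩ : Fin d)] = [⟨2, by omega⟩] :=
        B_apply_other 0 h0 (show (2 : ℕ) ≠ 0 by omega) (show (2 : ℕ) ≠ 1 by omega)
      have a4 : b1 [(⟨2, by omega⟩ : Fin d)] = [⟨1, by omega⟩] := B_apply_hi 1 h1
      have a5 : b0 [(⟨1, by omega⟩ : Fin d)] = [⟨0, by omega⟩] := B_apply_hi 0 h0
      have s1 : sect b0 [(⟨0, by omega⟩ : Fin d)] = 1 := sect_B_lo 0 h0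
      have s2 : sect b1 [(⟨1, by omega⟩ : Fin d)] = 1 := sect_B_lo 1 h1
      have s3 : sect b0 [(⟨2, by omega⟩ : Fin d)] = b0 :=
        sect_B_other 0 h0 (show (2 : ℕ) ≠ 0 by omega) (show (2 : ℕ) ≠ 1 by omega)
      have s4 : sect b1 [(⟨2, by omega⟩ : Fin d)] = 1 := sect_B_hi 1 h1
      have s5 : sect b0 [(⟨1, by omega⟩ : Fin d)] = 1 := sect_B_hi 0 h0
      refine ⟨b0 * (b1 * (b0 * (b1 * b0))), ?_, ?_, ?_⟩
      · exact mul_mem (B_mem_G 0 h0) (mul_mem (B_mem_G 1 h1)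
          (mul_mem (B_mem_G 0 h0) (mul_mem (B_mem_G 1 h1) (B_mem_G 0 h0))))
      · simp only [Equiv.Perm.mul_apply]
        rw [a1, a2, a3, a4, a5]
      · have m4 : b1 * b0 ∈ AutT (Fin d) := mul_mem mb1 mb0
        have m3 : b0 * (b1 * b0) ∈ AutT (Fin d) := mul_mem mb0 m4
        have m2 : b1 * (b0 * (b1 * b0)) ∈ AutT (Fin d) := mul_mem mb1 m3
        have v4 : (b1 * b0) [(⟨0, by omega⟩ : Fin d)] = [⟨2, by omega⟩] := by
          simp only [Equiv.Perm.mul_apply]; rw [a1, a2]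
        have v3 : (b0 * (b1 * b0)) [(⟨0, by omega⟩ : Fin d)] = [⟨2, by omega⟩] := by
          simp only [Equiv.Perm.mul_apply]; rw [a1, a2, a3]
        have v2 : (b1 * (b0 * (b1 * b0))) [(⟨0, by omega⟩ : Fin d)] = [⟨1, by omega⟩] := by
          simp only [Equiv.Perm.mul_apply]; rw [a1, a2, a3, a4]
        rw [sect_mul mb0 m2, v2, s5, sect_mul mb1 m3, v3, s4, sect_mul mb0 m4, v4, s3,
          sect_mul mb1 mb0, a1, s2, s1]
        try group
    · -- i = j + 1 : use the word b_j b_i b_j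
      obtain ⟨j, rfl⟩ : ∃ j, i = j + 1 := ⟨i - 1, by omega⟩
      have hj : j + 1 < d := by omega
      set bj := hanoiB d j hj with hbj
      set bi := hanoiB d (j + 1) h with hbi
      have mbj : bj ∈ AutT (Fin d) := B_mem j hj
      have mbi : bi ∈ AutT (Fin d) := B_mem (j + 1) h
      have hk : k = (⟨j + 1, by omega⟩ : Fin d) := Fin.ext hki
      rw [hk]
      have a1 : bj [(⟨j + 1, by omega⟩ : Fin d)] = [⟨j, by omega⟩] := B_apply_hi j hj
      have a2 : bi [(⟨j, by omega⟩ : Fin d)] = [⟨j, by omega⟩] :=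
        B_apply_other (j + 1) h (show j ≠ j + 1 by omega) (show j ≠ j + 1 + 1 by omega)
      have a3 : bj [(⟨j, by omega⟩ : Fin d)] = [⟨j + 1, by omega⟩] := B_apply_lo j hj
      have s1 : sect bj [(⟨j + 1, by omega⟩ : Fin d)] = 1 := sect_B_hi j hj
      have s2 : sect bi [(⟨j, by omega⟩ : Fin d)] = bi :=
        sect_B_other (j + 1) h (show j ≠ j + 1 by omega) (show j ≠ j + 1 + 1 by omega)
      have s3 : sect bj [(⟨j, by omega⟩ : Fin d)] = 1 := sect_B_lo j hj
      refine ⟨bj * (bi * bj), ?_, ?_, ?_⟩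
      · exact mul_mem (B_mem_G j hj) (mul_mem (B_mem_G (j + 1) h) (B_mem_G j hj))
      · simp only [Equiv.Perm.mul_apply]; rw [a1, a2, a3]
      · have m2 : bi * bj ∈ AutT (Fin d) := mul_mem mbi mbj
        have v2 : (bi * bj) [(⟨j + 1, by omega⟩ : Fin d)] = [⟨j, by omega⟩] := by
          simp only [Equiv.Perm.mul_apply]; rw [a1, a2]
        rw [sect_mul mbj m2, v2, s3, sect_mul mbi mbj, a1, s2, s1]
        try group
  · by_cases hki' : (k : ℕ) = i + 1
    · -- vertex k = x_{i+1}
      by_cases htop : i + 2 < d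
      · -- use the word b_{i+1} b_i b_{i+1}
        have hk : k = (⟨i + 1, by omega⟩ : Fin d) := Fin.ext hki'
        rw [hk]
        set bi := hanoiB d i h with hbi
        set bi1 := hanoiB d (i + 1) htop with hbi1
        have mbi : bi ∈ AutT (Fin d) := B_mem i h
        have mbi1 : bi1 ∈ AutT (Fin d) := B_mem (i + 1) htop
        have a1 : bi1 [(⟨i + 1, by omega⟩ : Fin d)] = [⟨i + 2, by omega⟩] :=
          B_apply_lo (i + 1) htop
        have a2 : bi [(⟨i + 2, by omega⟩ : Fin d)] = [⟨i + 2, by omega⟩] :=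
          B_apply_other i h (show i + 2 ≠ i by omega) (show i + 2 ≠ i + 1 by omega)
        have a3 : bi1 [(⟨i + 2, by omega⟩ : Fin d)] = [⟨i + 1, by omega⟩] :=
          B_apply_hi (i + 1) htop
        have s1 : sect bi1 [(⟨i + 1, by omega⟩ : Fin d)] = 1 := sect_B_lo (i + 1) htop
        have s2 : sect bi [(⟨i + 2, by omega⟩ : Fin d)] = bi :=
          sect_B_other i h (show i + 2 ≠ i by omega) (show i + 2 ≠ i + 1 by omega)
        have s3 : sect bi1 [(⟨i + 2, by omega⟩ : Fin d)] = 1 := sect_B_hi (i + 1) htop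
        refine ⟨bi1 * (bi * bi1), ?_, ?_, ?_⟩
        · exact mul_mem (B_mem_G (i + 1) htop) (mul_mem (B_mem_G i h) (B_mem_G (i + 1) htop))
        · simp only [Equiv.Perm.mul_apply]; rw [a1, a2, a3]
        · have m2 : bi * bi1 ∈ AutT (Fin d) := mul_mem mbi mbi1
          have v2 : (bi * bi1) [(⟨i + 1, by omega⟩ : Fin d)] = [⟨i + 2, by omega⟩] := by
            simp only [Equiv.Perm.mul_apply]; rw [a1, a2]
          rw [sect_mul mbi1 m2, v2, s3, sect_mul mbi mbi1, a1, s2, s1]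
          try group
      · -- k = x_{d-1}, i = d - 2 ≥ 1 : use the word b_i b_j b_i b_j b_i with j = i - 1
        obtain ⟨j, rfl⟩ : ∃ j, i = j + 1 := ⟨i - 1, by omega⟩
        have hj : j + 1 < d := by omega
        set bj := hanoiB d j hj with hbj
        set bi := hanoiB d (j + 1) h with hbi
        have mbj : bj ∈ AutT (Fin d) := B_mem j hj
        have mbi : bi ∈ AutT (Fin d) := B_mem (j + 1) h
        have hk : k = (⟨j + 2, by omega⟩ : Fin d) :=
          Fin.ext (show (k : ℕ) = j + 2 by omega)
        rw [hk]
        have a1 : bi [(⟨j + 2, by omega⟩ : Fin d)] = [⟨j + 1, by omega⟩] :=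
          B_apply_hi (j + 1) h
        have a2 : bj [(⟨j + 1, by omega⟩ : Fin d)] = [⟨j, by omega⟩] := B_apply_hi j hj
        have a3 : bi [(⟨j, by omega⟩ : Fin d)] = [⟨j, by omega⟩] :=
          B_apply_other (j + 1) h (show j ≠ j + 1 by omega) (show j ≠ j + 1 + 1 by omega)
        have a4 : bj [(⟨j, by omega⟩ : Fin d)] = [⟨j + 1, by omega⟩] := B_apply_lo j hj
        have a5 : bi [(⟨j + 1, by omega⟩ : Fin d)] = [⟨j + 2, by omega⟩] :=
          B_apply_lo (j + 1) h
        have s1 : sect bi [(⟨j + 2, by omega⟩ : Fin d)] = 1 := sect_B_hi (j + 1) h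
        have s2 : sect bj [(⟨j + 1, by omega⟩ : Fin d)] = 1 := sect_B_hi j hj
        have s3 : sect bi [(⟨j, by omega⟩ : Fin d)] = bi :=
          sect_B_other (j + 1) h (show j ≠ j + 1 by omega) (show j ≠ j + 1 + 1 by omega)
        have s4 : sect bj [(⟨j, by omega⟩ : Fin d)] = 1 := sect_B_lo j hj
        have s5 : sect bi [(⟨j + 1, by omega⟩ : Fin d)] = 1 := sect_B_lo (j + 1) h
        refine ⟨bi * (bj * (bi * (bj * bi))), ?_, ?_, ?_⟩
        · exact mul_mem (B_mem_G (j + 1) h) (mul_mem (B_mem_G j hj)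
            (mul_mem (B_mem_G (j + 1) h) (mul_mem (B_mem_G j hj) (B_mem_G (j + 1) h))))
        · simp only [Equiv.Perm.mul_apply]
          rw [a1, a2, a3, a4, a5]
        · have m4 : bj * bi ∈ AutT (Fin d) := mul_mem mbj mbi
          have m3 : bi * (bj * bi) ∈ AutT (Fin d) := mul_mem mbi m4
          have m2 : bj * (bi * (bj * bi)) ∈ AutT (Fin d) := mul_mem mbj m3
          have v4 : (bj * bi) [(⟨j + 2, by omega⟩ : Fin d)] = [⟨j, by omega⟩] := by
            simp only [Equiv.Perm.mul_apply]; rw [a1, a2]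
          have v3 : (bi * (bj * bi)) [(⟨j + 2, by omega⟩ : Fin d)] = [⟨j, by omega⟩] := by
            simp only [Equiv.Perm.mul_apply]; rw [a1, a2, a3]
          have v2 : (bj * (bi * (bj * bi))) [(⟨j + 2, by omega⟩ : Fin d)]
              = [⟨j + 1, by omega⟩] := by
            simp only [Equiv.Perm.mul_apply]; rw [a1, a2, a3, a4]
          rw [sect_mul mbi m2, v2, s5, sect_mul mbj m3, v3, s4, sect_mul mbi m4, v4, s3,
            sect_mul mbj mbi, a1, s2, s1]
          try group
    · -- k ∉ {x_i, x_{i+1}} : b_i itself works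
      exact ⟨hanoiB d i h, B_mem_G i h, B_apply_other i h hki hki',
        sect_B_other i h hki hki'⟩

lemma surj1 (hd : 3 ≤ d) (k : Fin d) :
    ∀ g ∈ hanoiGroup d, ∃ w ∈ hanoiGroup d, w [k] = [k] ∧ sect w [k] = g := by
  intro g hg
  induction hg using Subgroup.closure_induction with
  | mem x hx =>
    obtain ⟨i, h, rfl⟩ := hx
    exact surj1_gen hd k i h
  | one => exact ⟨1, one_mem _, rfl, sect_one _⟩
  | mul x y hx hy ihx ihy =>
    obtain ⟨w1, hw1G, hw1f, hw1s⟩ := ihx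
    obtain ⟨w2, hw2G, hw2f, hw2s⟩ := ihy
    refine ⟨w1 * w2, mul_mem hw1G hw2G, ?_, ?_⟩
    · show w1 (w2 [k]) = [k]
      rw [hw2f, hw1f]
    · rw [sect_mul (hanoiGroup_le_AutT hw1G) (hanoiGroup_le_AutT hw2G), hw2f, hw1s, hw2s]
  | inv x hx ihx =>
    obtain ⟨w, hwG, hwf, hws⟩ := ihx
    have hwA := hanoiGroup_le_AutT hwG
    have hfix : w⁻¹ [k] = [k] := by
      conv_lhs => rw [← hwf]
      exact Equiv.Perm.inv_apply_self w [k]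
    refine ⟨w⁻¹, inv_mem hwG, hfix, ?_⟩
    rw [sect_inv' hwA, hfix, hws]

lemma surj_all (hd : 3 ≤ d) (u : List (Fin d)) :
    ∀ g ∈ hanoiGroup d, ∃ w ∈ hanoiGroup d, w u = u ∧ sect w u = g := by
  induction u with
  | nil =>
    intro g hg
    exact ⟨g, hg, autT_nil (hanoiGroup_le_AutT hg), sect_nil (hanoiGroup_le_AutT hg)⟩
  | cons x u ih =>
    intro g hg
    obtain ⟨w1, hw1G, hw1f, hw1s⟩ := ih g hg
    obtain ⟨w, hwG, hwf, hws⟩ := surj1 hd x w1 hw1G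
    have hwA := hanoiGroup_le_AutT hwG
    refine ⟨w, hwG, ?_, ?_⟩
    · rw [show x :: u = [x] ++ u from rfl, apply_append hwA, hwf, hws, hw1f]
    · rw [show x :: u = [x] ++ u from rfl, sect_sect hwA, hws, hw1s]

lemma hanoi_fractal (hd : 3 ≤ d) : Fractal (hanoiGroup d) := by
  intro u
  apply Set.ext
  intro g
  constructor
  · rintro ⟨w, hw, rfl⟩
    have hw' : w ∈ stV (hanoiGroup d) u := hw
    exact hanoi_selfSimilar w hw'.1 u
  · intro hg
    obtain ⟨w, hwG, hwf, hws⟩ := surj_all hd u g hg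
    exact ⟨w, mem_stV.2 ⟨hwG, hwf⟩, hws⟩

end Fractality


/-! ### The parity invariant: not strongly fractal -/

section Sign

variable {d : ℕ} {f g : Equiv.Perm (List (Fin d))}

/-- Sign of the root label. -/
noncomputable def rootSign (g : Equiv.Perm (List (Fin d))) : ℤˣ :=
  Equiv.Perm.sign (label g ([] : List (Fin d)))

/-- Parity of a vertex of the first level. -/
def vSign (x : Fin d) : ℤˣ := (-1) ^ (x : ℕ)

lemma vSign_sq (x : Fin d) : vSign x * vSign x = 1 := Int.units_mul_self _

lemma rootSign_one : rootSign (1 : Equiv.Perm (List (Fin d))) = 1 := by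
  rw [rootSign, label_root_one, map_one]

lemma rootSign_mul (hf : f ∈ AutT (Fin d)) (hg : g ∈ AutT (Fin d)) :
    rootSign (f * g) = rootSign f * rootSign g := by
  rw [rootSign, label_root_mul hf hg, map_mul]; rfl

lemma rootSign_inv (hg : g ∈ AutT (Fin d)) : rootSign g⁻¹ = (rootSign g)⁻¹ := by
  rw [rootSign, label_root_inv hg, map_inv]; rfl

lemma rootSign_B (i : ℕ) (h : i + 1 < d) : rootSign (hanoiB d i h) = -1 := by
  rw [rootSign, label_B, Equiv.Perm.sign_swap (B_ne i h)]

lemma units_id_mul : ∀ A B X Y Z : ℤˣ, (A * Y * Z) * (B * X * Y) = A * B * X * Z := by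
  intro A B X Y Z
  rcases Int.units_eq_one_or A with rfl | rfl <;>
    rcases Int.units_eq_one_or B with rfl | rfl <;>
      rcases Int.units_eq_one_or X with rfl | rfl <;>
        rcases Int.units_eq_one_or Y with rfl | rfl <;>
          rcases Int.units_eq_one_or Z with rfl | rfl <;> decide

lemma units_id_inv : ∀ A X Y : ℤˣ, (A * Y * X)⁻¹ = A⁻¹ * X * Y := by
  intro A X Y
  rcases Int.units_eq_one_or A with rfl | rfl <;>
    rcases Int.units_eq_one_or X with rfl | rfl <;>
      rcases Int.units_eq_one_or Y with rfl | rfl <;> decide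

lemma sign_invariant :
    ∀ g ∈ hanoiGroup d, ∀ x : Fin d,
      rootSign (sect g [x]) = rootSign g * vSign x * vSign (label g [] x) := by
  intro g hg
  induction hg using Subgroup.closure_induction with
  | mem b hb =>
    obtain ⟨i, h, rfl⟩ := hb
    intro x
    have hswap := label_B i h
    by_cases hx : (x : ℕ) = i
    · rw [show x = (⟨i, Nat.lt_of_succ_lt h⟩ : Fin d) from Fin.ext hx]
      rw [sect_B_lo i h, rootSign_one, rootSign_B, hswap, Equiv.swap_apply_left]
      show (1 : ℤˣ) = -1 * (-1) ^ i * (-1) ^ (i + 1)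
      rw [pow_succ]
      rcases Nat.even_or_odd i with hi | hi
      · rw [hi.neg_one_pow]; decide
      · rw [hi.neg_one_pow]; decide
    · by_cases hx' : (x : ℕ) = i + 1
      · rw [show x = (⟨i + 1, h⟩ : Fin d) from Fin.ext hx']
        rw [sect_B_hi i h, rootSign_one, rootSign_B, hswap, Equiv.swap_apply_right]
        show (1 : ℤˣ) = -1 * (-1) ^ (i + 1) * (-1) ^ i
        rw [pow_succ]
        rcases Nat.even_or_odd i with hi | hi
        · rw [hi.neg_one_pow]; decide
        · rw [hi.neg_one_pow]; decide
      · rw [sect_B_other i h hx hx', rootSign_B, hswap,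
          Equiv.swap_apply_of_ne_of_ne (by simp [Fin.ext_iff, hx]) (by simp [Fin.ext_iff, hx'])]
        rw [mul_assoc, vSign_sq, mul_one]
  | one =>
    intro x
    rw [sect_one, rootSign_one, label_root_one]
    show (1 : ℤˣ) = 1 * vSign x * vSign x
    rw [one_mul, vSign_sq]
  | mul f g' hf hg' ihf ihg' =>
    intro x
    have hfA := hanoiGroup_le_AutT hf
    have hgA := hanoiGroup_le_AutT hg'
    rw [sect_mul hfA hgA, apply_singleton hgA x,
      rootSign_mul (sect_mem hfA _) (sect_mem hgA _), ihf (label g' [] x), ihg' x,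
      label_root_mul hfA hgA, rootSign_mul hfA hgA, Equiv.Perm.mul_apply]
    exact units_id_mul (rootSign f) (rootSign g') (vSign x) (vSign (label g' [] x)) _
  | inv f hf ihf =>
    intro x
    have hfA := hanoiGroup_le_AutT hf
    have hfA' := (AutT (Fin d)).inv_mem hfA
    have hy : f⁻¹ [x] = [label f⁻¹ [] x] := apply_singleton hfA' x
    have hlx : label f [] (label f⁻¹ [] x) = x := by
      rw [label_root_inv hfA]
      exact Equiv.Perm.apply_inv_self _ _
    rw [sect_inv' hfA, hy, rootSign_inv (sect_mem hfA _), ihf (label f⁻¹ [] x), hlx,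
      rootSign_inv hfA]
    exact units_id_inv (rootSign f) (vSign x) (vSign (label f⁻¹ [] x))

lemma label_root_of_stL1 (hg : g ∈ stL (hanoiGroup d) 1) : label g [] = 1 := by
  apply Equiv.ext; intro x
  have h1 : g [x] = [label g [] x] := apply_singleton (hanoiGroup_le_AutT hg.1) x
  have h2 : g [x] = [x] := hg.2 [x] rfl
  rw [h2] at h1
  exact (List.cons.injEq _ _ _ _ ▸ h1.symm).1

lemma hanoi_proper (hd : 3 ≤ d) (k : Fin d) :
    (fun g => sect g [k]) '' (stL (hanoiGroup d) 1 : Set (Equiv.Perm (List (Fin d))))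
      ⊂ (hanoiGroup d : Set (Equiv.Perm (List (Fin d)))) := by
  have hsub : (fun g => sect g [k]) '' (stL (hanoiGroup d) 1 : Set (Equiv.Perm (List (Fin d))))
      ⊆ (hanoiGroup d : Set (Equiv.Perm (List (Fin d)))) := by
    rintro _ ⟨g, hg, rfl⟩
    have hg' : g ∈ stL (hanoiGroup d) 1 := hg
    exact hanoi_selfSimilar g hg'.1 [k]
  have h01 : 0 + 1 < d := by omega
  refine (Set.ssubset_iff_of_subset hsub).2 ⟨hanoiB d 0 h01, B_mem_G 0 h01, ?_⟩
  rintro ⟨g, hg, heq⟩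
  have hg' : g ∈ stL (hanoiGroup d) 1 := hg
  have hinv := sign_invariant g hg'.1 k
  have hl : label g [] = 1 := label_root_of_stL1 hg'
  have heq' : sect g [k] = hanoiB d 0 h01 := heq
  rw [heq', rootSign_B, hl] at hinv
  rw [show rootSign g = 1 from by rw [rootSign, hl, map_one]] at hinv
  rw [Equiv.Perm.one_apply, one_mul, vSign_sq] at hinv
  exact absurd hinv (by decide)

end Sign

/-- For every `d ≥ 3`, the subgroup `G = ⟨b_1, …, b_{d-1}⟩` of the
Hanoi Towers group is fractal but not strongly fractal; in fact `ψ_{x_k}(st_G(L_1))` is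
a proper subgroup of `G` for every `k`. -/
theorem hanoiGroup_fractal_not_stronglyFractal (d : ℕ) (hd : 3 ≤ d) :
    Fractal (hanoiGroup d) ∧ ¬ StronglyFractal (hanoiGroup d) ∧
      ∀ k : Fin d,
        (fun g => sect g [k]) '' (stL (hanoiGroup d) 1 : Set (Equiv.Perm (List (Fin d))))
          ⊂ (hanoiGroup d : Set (Equiv.Perm (List (Fin d)))) := by
  refine ⟨hanoi_fractal hd, ?_, fun k => hanoi_proper hd k⟩
  intro hSF
  have h := hanoi_proper hd ⟨0, by omega⟩
  rw [hSF ⟨0, by omega⟩] at h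
  exact h.ne rfl

end TreeFract
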